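/- The map θ, mapping a barred permutation p̄ of [n] to the word w with w_i = 1 + (number of bars to the right of the letter i in p̄), is a bijection from the set of barred permutations of [n] onto the set of unrestricted growth functions of length n. -/

import Mathlib

open Finset

variable {n : ℕ}

/-- The word (in one-line notation, with letters `1,...,n`) of a permutation of `[n]`. -/
def pw (p : Equiv.Perm (Fin n)) : Fin n → ℕ := fun i => (p i : ℕ) + 1

/-- Descent number of a word: positions `i` with `w_i > w_{i+1}`. -/
def desW (w : Fin n → ℕ) : ℕ :=
  (Finset.univ.filter fun i : Fin n => ∃ j : Fin n, (j : ℕ) = (i : ℕ) + 1 ∧ w j < w i).card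

/-- Major index of a word: the sum of the (1-indexed) descent positions. -/
def majW (w : Fin n → ℕ) : ℕ :=
  ∑ i ∈ Finset.univ.filter
      (fun i : Fin n => ∃ j : Fin n, (j : ℕ) = (i : ℕ) + 1 ∧ w j < w i), ((i : ℕ) + 1)

/-- Occurrences of the vincular pattern 2-31: `i < j` with `w_{j+1} < w_i < w_j`. -/
def pat2_31 (w : Fin n → ℕ) : ℕ :=
  ((Finset.univ ×ˢ Finset.univ).filter fun q : Fin n × Fin n =>
    q.1 < q.2 ∧ ∃ j' : Fin n, (j' : ℕ) = (q.2 : ℕ) + 1 ∧ w j' < w q.1 ∧ w q.1 < w q.2).card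

/-- Occurrences of the vincular pattern 2-13: `i < j` with `w_j < w_i < w_{j+1}`. -/
def pat2_13 (w : Fin n → ℕ) : ℕ :=
  ((Finset.univ ×ˢ Finset.univ).filter fun q : Fin n × Fin n =>
    q.1 < q.2 ∧ ∃ j' : Fin n, (j' : ℕ) = (q.2 : ℕ) + 1 ∧ w q.2 < w q.1 ∧ w q.1 < w j').card

/-- Occurrences of the vincular pattern 1-32: `i < j` with `w_i < w_{j+1} < w_j`. -/
def pat1_32 (w : Fin n → ℕ) : ℕ :=
  ((Finset.univ ×ˢ Finset.univ).filter fun q : Fin n × Fin n =>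
    q.1 < q.2 ∧ ∃ j' : Fin n, (j' : ℕ) = (q.2 : ℕ) + 1 ∧ w q.1 < w j' ∧ w j' < w q.2).card

/-- Occurrences of the vincular pattern 3-21: `i < j` with `w_{j+1} < w_j < w_i`. -/
def pat3_21 (w : Fin n → ℕ) : ℕ :=
  ((Finset.univ ×ˢ Finset.univ).filter fun q : Fin n × Fin n =>
    q.1 < q.2 ∧ ∃ j' : Fin n, (j' : ℕ) = (q.2 : ℕ) + 1 ∧ w j' < w q.2 ∧ w q.2 < w q.1).card

/-- The Babson–Steingrímsson statistic BAST = (21) + (2-13) + (1-32) + (3-21). -/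
def BAST (w : Fin n → ℕ) : ℕ := desW w + pat2_13 w + pat1_32 w + pat3_21 w

/-- `w` avoids the vincular pattern 1-32: there is no `i < j` with `w_i < w_{j+1} < w_j`. -/
def Avoids132 (w : Fin n → ℕ) : Prop :=
  ∀ i j j' : Fin n, i < j → (j' : ℕ) = (j : ℕ) + 1 → ¬(w i < w j' ∧ w j' < w j)

/-- `w` is an unrestricted growth function: positive letters, and every value
`1 ≤ j ≤ bk(w)` occurs in `w`. -/
def IsURG (w : Fin n → ℕ) : Prop :=
  (∀ i, 1 ≤ w i) ∧ ∀ j, 1 ≤ j → j ≤ Finset.univ.sup w → ∃ i, w i = j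

/-- `bars` is a valid set of bars for the permutation `p`: each bar sits between
two consecutive letters, and there is a bar at every descent of `p`. -/
def IsBarred (p : Equiv.Perm (Fin n)) (bars : Finset (Fin n)) : Prop :=
  (∀ i ∈ bars, (i : ℕ) + 1 < n) ∧
    ∀ i j : Fin n, (j : ℕ) = (i : ℕ) + 1 → p j < p i → i ∈ bars

/-- The word θ(p̄): the letter `i` (here `i : Fin n` encodes the letter `i+1`) is sent to
one plus the number of bars lying to the right of the letter `i+1` in the barred permutation. -/
def theta (p : Equiv.Perm (Fin n)) (bars : Finset (Fin n)) : Fin n → ℕ :=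
  fun i => 1 + (bars.filter fun b => p.symm i ≤ b).card

/-! ### Auxiliary material for the proof -/

/-- Number of bars weakly to the right of position `m`. -/
def barCount (bars : Finset (Fin n)) (m : ℕ) : ℕ :=
  (bars.filter fun b : Fin n => m ≤ (b : ℕ)).card

lemma theta_eq (p : Equiv.Perm (Fin n)) (bars : Finset (Fin n)) (i : Fin n) :
    theta p bars i = 1 + barCount bars ((p.symm i : Fin n) : ℕ) := by
  have h : (bars.filter fun b => p.symm i ≤ b) =
      bars.filter fun b : Fin n => ((p.symm i : Fin n) : ℕ) ≤ (b : ℕ) :=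
    Finset.filter_congr fun b _ => Fin.le_def
  show 1 + (bars.filter fun b => p.symm i ≤ b).card = _
  rw [h]
  rfl

lemma barCount_antitone (bars : Finset (Fin n)) : Antitone (barCount bars) := by
  intro a b hab
  apply Finset.card_le_card
  intro x hx
  simp only [Finset.mem_filter] at *
  exact ⟨hx.1, le_trans hab hx.2⟩

lemma filter_val_eq (bars : Finset (Fin n)) (k : Fin n) :
    (bars.filter fun b : Fin n => (b : ℕ) = (k : ℕ)) = if k ∈ bars then {k} else ∅ := by
  ext b
  simp only [Finset.mem_filter]
  split <;> rename_i h <;> simp only [Finset.mem_singleton, Finset.notMem_empty,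
    iff_false]
  · constructor
    · rintro ⟨hb, hv⟩; exact Fin.ext hv
    · rintro rfl; exact ⟨h, rfl⟩
  · rintro ⟨hb, hv⟩
    exact h (Fin.ext hv ▸ hb)

lemma card_filter_val_le_one (bars : Finset (Fin n)) (k : Fin n) :
    (bars.filter fun b : Fin n => (b : ℕ) = (k : ℕ)).card ≤ 1 := by
  rw [filter_val_eq]
  split <;> simp

lemma barCount_succ (bars : Finset (Fin n)) (m : ℕ) :
    barCount bars m = barCount bars (m + 1) + (bars.filter fun b : Fin n => (b : ℕ) = m).card := by
  unfold barCount
  rw [← Finset.card_union_of_disjoint]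
  · rw [← Finset.filter_or]
    congr 1
    apply Finset.filter_congr
    intro b _
    constructor
    · intro h; omega
    · intro h; omega
  · rw [Finset.disjoint_left]
    intro a ha hb
    simp only [Finset.mem_filter] at ha hb
    omega

section Barred

variable {p : Equiv.Perm (Fin n)} {bars : Finset (Fin n)}

/-- `θ(p̄) ∘ p` is weakly decreasing. -/
lemma theta_comp_antitone (k k' : Fin n) (h : k ≤ k') :
    theta p bars (p k') ≤ theta p bars (p k) := by
  rw [theta_eq, theta_eq]
  simp only [Equiv.symm_apply_apply]
  exact Nat.add_le_add_left (barCount_antitone bars h) 1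

lemma tie_break_consec (hb : IsBarred p bars) (k k' : Fin n) (h : (k' : ℕ) = (k : ℕ) + 1)
    (hw : theta p bars (p k) = theta p bars (p k')) : p k < p k' := by
  have h1 : barCount bars (k : ℕ) = barCount bars ((k : ℕ) + 1) +
      (bars.filter fun b : Fin n => (b : ℕ) = (k : ℕ)).card := barCount_succ bars k
  rw [theta_eq, theta_eq] at hw
  simp only [Equiv.symm_apply_apply] at hw
  rw [h] at hw
  have hmem : k ∉ bars := by
    intro hk
    rw [filter_val_eq, if_pos hk] at h1
    simp at h1
    omega
  have hne : p k ≠ p k' := fun he => by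
    have := p.injective he
    subst this
    omega
  rcases lt_or_gt_of_ne hne with h' | h'
  · exact h'
  · exact absurd (hb.2 k k' h h') hmem

lemma tie_break_aux (hb : IsBarred p bars) :
    ∀ d : ℕ, ∀ k k' : Fin n, (k' : ℕ) = (k : ℕ) + d + 1 →
      theta p bars (p k) = theta p bars (p k') → p k < p k' := by
  intro d
  induction d with
  | zero => intro k k' h hw; exact tie_break_consec hb k k' h hw
  | succ d ih =>
    intro k k' h hw
    have hk1 : (k : ℕ) + 1 < n := by have := k'.isLt; omega
    set k1 : Fin n := ⟨(k : ℕ) + 1, hk1⟩ with hk1def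
    have hle1 : theta p bars (p k1) ≤ theta p bars (p k) :=
      theta_comp_antitone k k1 (by rw [Fin.le_def]; simp [hk1def])
    have hle2 : theta p bars (p k') ≤ theta p bars (p k1) :=
      theta_comp_antitone k1 k' (by rw [Fin.le_def]; simp [hk1def]; omega)
    have heq1 : theta p bars (p k) = theta p bars (p k1) := by omega
    exact lt_trans (tie_break_consec hb k k1 rfl heq1)
      (ih k1 k' (by simp [hk1def]; omega) (heq1 ▸ hw))

lemma tie_break (hb : IsBarred p bars) (k k' : Fin n) (h : k < k')
    (hw : theta p bars (p k) = theta p bars (p k')) : p k < p k' := by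
  have h' : (k' : ℕ) = (k : ℕ) + ((k' : ℕ) - (k : ℕ) - 1) + 1 := by
    rw [Fin.lt_def] at h; omega
  exact tie_break_aux hb _ k k' h' hw

/-- Bars are exactly the descents of `θ(p̄) ∘ p`. -/
lemma bars_iff (hb : IsBarred p bars) (k : Fin n) :
    k ∈ bars ↔ ∃ j : Fin n, (j : ℕ) = (k : ℕ) + 1 ∧ theta p bars (p j) < theta p bars (p k) := by
  constructor
  · intro hk
    have hlt : (k : ℕ) + 1 < n := hb.1 k hk
    refine ⟨⟨(k : ℕ) + 1, hlt⟩, rfl, ?_⟩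
    rw [theta_eq, theta_eq]
    simp only [Equiv.symm_apply_apply]
    have h1 := barCount_succ bars (k : ℕ)
    rw [filter_val_eq, if_pos hk] at h1
    simp only [Finset.card_singleton] at h1
    omega
  · rintro ⟨j, hj, hlt⟩
    rw [theta_eq, theta_eq] at hlt
    simp only [Equiv.symm_apply_apply] at hlt
    rw [hj] at hlt
    have h1 := barCount_succ bars (k : ℕ)
    rw [filter_val_eq] at h1
    by_contra hk
    rw [if_neg hk] at h1
    simp at h1
    omega

/-- Intermediate value property for `1 + barCount`. -/
lemma exists_theta_val (hb : IsBarred p bars) :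
    ∀ d : ℕ, ∀ k : Fin n, n = (k : ℕ) + 1 + d → ∀ t, 1 ≤ t →
      t ≤ 1 + barCount bars (k : ℕ) → ∃ m : Fin n, 1 + barCount bars (m : ℕ) = t := by
  intro d
  induction d with
  | zero =>
    intro k hk t ht1 ht2
    have hc : barCount bars (k : ℕ) = 0 := by
      unfold barCount
      rw [Finset.card_eq_zero, Finset.filter_eq_empty_iff]
      intro b hbm
      have := hb.1 b hbm
      omega
    exact ⟨k, by omega⟩
  | succ d ih =>
    intro k hk t ht1 ht2
    rcases eq_or_lt_of_le ht2 with he | hlt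
    · exact ⟨k, he.symm⟩
    · have hk1 : (k : ℕ) + 1 < n := by omega
      have h1 := barCount_succ bars (k : ℕ)
      have h2 := card_filter_val_le_one bars k
      refine ih ⟨(k : ℕ) + 1, hk1⟩ (by simp; omega) t ht1 ?_
      simp only
      omega

lemma theta_isURG (hb : IsBarred p bars) : IsURG (theta p bars) := by
  constructor
  · intro i; rw [theta_eq]; omega
  · intro j hj1 hjsup
    rcases Nat.eq_zero_or_pos n with h0 | hpos
    · subst h0
      simp only [Finset.univ_eq_empty, Finset.sup_empty, Nat.bot_eq_zero] at hjsup
      omega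
    · have hne : (Finset.univ : Finset (Fin n)).Nonempty :=
        ⟨⟨0, hpos⟩, Finset.mem_univ _⟩
      obtain ⟨i0, -, hi0⟩ := Finset.exists_mem_eq_sup Finset.univ hne (theta p bars)
      rw [hi0] at hjsup
      set k0 : Fin n := p.symm i0 with hk0
      have hji : j ≤ 1 + barCount bars (k0 : ℕ) := by
        rw [theta_eq] at hjsup; exact hjsup
      obtain ⟨m, hm⟩ := exists_theta_val hb (n - 1 - (k0 : ℕ)) k0
        (by have := k0.isLt; omega) j hj1 hji
      refine ⟨p m, ?_⟩
      rw [theta_eq]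
      simpa using hm

end Barred

/-- The inverse permutation: sort letters by word value descending, ties by letter ascending. -/
def psiP (w : Fin n → ℕ) : Equiv.Perm (Fin n) := Tuple.sort (fun i => -(w i : ℤ))

/-- The inverse bar set: descents of `w ∘ psiP w`. -/
def psiB (w : Fin n → ℕ) : Finset (Fin n) :=
  Finset.univ.filter fun k =>
    ∃ j : Fin n, (j : ℕ) = (k : ℕ) + 1 ∧ w (psiP w j) < w (psiP w k)

lemma psiP_mono (w : Fin n → ℕ) {k k' : Fin n} (h : k ≤ k') :
    w (psiP w k') ≤ w (psiP w k) := by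
  have := Tuple.monotone_sort (fun i => -(w i : ℤ)) h
  simp only [Function.comp_apply, neg_le_neg_iff, Nat.cast_le] at this
  exact this

lemma psiP_tie (w : Fin n → ℕ) {k k' : Fin n} (h : k < k')
    (hw : w (psiP w k) = w (psiP w k')) : psiP w k < psiP w k' := by
  have h2 := (Tuple.eq_sort_iff.mp (rfl : Tuple.sort (fun i => -(w i : ℤ)) = _)).2 k k' h
  simp only [psiP] at hw
  exact h2 (by rw [hw])

lemma psiP_theta (hb : IsBarred p bars) : psiP (theta p bars) = p := by
  symm
  rw [psiP, Tuple.eq_sort_iff]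
  constructor
  · intro a b hab
    simp only [Function.comp_apply, neg_le_neg_iff, Nat.cast_le]
    exact theta_comp_antitone a b hab
  · intro i j hij hf
    simp only [Function.comp_apply, neg_inj, Nat.cast_inj] at hf
    exact tie_break hb i j hij hf

lemma psiB_theta (hb : IsBarred p bars) : psiB (theta p bars) = bars := by
  ext k
  rw [psiB, Finset.mem_filter]
  rw [psiP_theta hb]
  simp only [Finset.mem_univ, true_and]
  exact (bars_iff hb k).symm

section URG

variable {w : Fin n → ℕ}

lemma psiB_isBarred (hw : IsURG w) : IsBarred (psiP w) (psiB w) := by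
  constructor
  · intro k hk
    rw [psiB, Finset.mem_filter] at hk
    obtain ⟨-, j, hj, -⟩ := hk
    have := j.isLt
    omega
  · intro i j hj hlt
    rw [psiB, Finset.mem_filter]
    refine ⟨Finset.mem_univ _, j, hj, ?_⟩
    have hij : i < j := by rw [Fin.lt_def]; omega
    rcases lt_or_eq_of_le (psiP_mono w hij.le) with h | h
    · exact h
    · exact absurd (psiP_tie w hij h.symm) (not_lt.mpr hlt.le)

lemma urg_pos (hw : IsURG w) (k : Fin n) : 1 ≤ w (psiP w k) := hw.1 _

lemma urg_step (hw : IsURG w) (k : Fin n) (hk : (k : ℕ) + 1 < n) :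
    w (psiP w k) ≤ w (psiP w ⟨(k : ℕ) + 1, hk⟩) + 1 := by
  by_contra hcon
  push_neg at hcon
  set k1 : Fin n := ⟨(k : ℕ) + 1, hk⟩
  set t := w (psiP w k1) + 1 with ht
  have ht1 : 1 ≤ t := by omega
  have htsup : t ≤ Finset.univ.sup w := by
    calc t ≤ w (psiP w k) := by omega
    _ ≤ Finset.univ.sup w := Finset.le_sup (Finset.mem_univ _)
  obtain ⟨i, hi⟩ := hw.2 t ht1 htsup
  set m : Fin n := (psiP w).symm i with hm
  have hgm : w (psiP w m) = t := by rw [hm]; simpa using hi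
  rcases le_or_gt (m : ℕ) (k : ℕ) with h | h
  · have := psiP_mono w (show m ≤ k from h)
    omega
  · have : k1 ≤ m := by rw [Fin.le_def]; show (k : ℕ) + 1 ≤ (m : ℕ); omega
    have := psiP_mono w this
    omega

lemma urg_last (hw : IsURG w) (k : Fin n) (hk : (k : ℕ) + 1 = n) :
    w (psiP w k) = 1 := by
  have h1 : 1 ≤ w (psiP w k) := hw.1 _
  have hsup : 1 ≤ Finset.univ.sup w :=
    le_trans h1 (Finset.le_sup (Finset.mem_univ _))
  obtain ⟨i, hi⟩ := hw.2 1 le_rfl hsup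
  set m : Fin n := (psiP w).symm i with hm
  have hgm : w (psiP w m) = 1 := by rw [hm]; simpa using hi
  have hmk : m ≤ k := by rw [Fin.le_def]; have := m.isLt; omega
  have := psiP_mono w hmk
  omega

lemma barCount_psiB (hw : IsURG w) :
    ∀ d : ℕ, ∀ k : Fin n, n = (k : ℕ) + 1 + d →
      barCount (psiB w) (k : ℕ) = w (psiP w k) - 1 := by
  intro d
  induction d with
  | zero =>
    intro k hk
    have hc : barCount (psiB w) (k : ℕ) = 0 := by
      unfold barCount
      rw [Finset.card_eq_zero, Finset.filter_eq_empty_iff]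
      intro b hbm
      have := (psiB_isBarred hw).1 b hbm
      omega
    rw [hc, urg_last hw k (by omega)]
  | succ d ih =>
    intro k hk
    have hk1 : (k : ℕ) + 1 < n := by omega
    set k1 : Fin n := ⟨(k : ℕ) + 1, hk1⟩ with hk1def
    have hih : barCount (psiB w) ((k : ℕ) + 1) = w (psiP w k1) - 1 := ih k1 (by show n = (k : ℕ) + 1 + 1 + d; omega)
    have h1 := barCount_succ (psiB w) (k : ℕ)
    rw [filter_val_eq] at h1
    have hstep : w (psiP w k) ≤ w (psiP w k1) + 1 := urg_step hw k hk1
    have hanti : w (psiP w k1) ≤ w (psiP w k) :=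
      psiP_mono w (by rw [Fin.le_def]; simp [hk1def])
    have hpos1 : 1 ≤ w (psiP w k1) := hw.1 _
    by_cases hmem : k ∈ psiB w
    · rw [if_pos hmem] at h1
      simp only [Finset.card_singleton] at h1
      rw [psiB, Finset.mem_filter] at hmem
      obtain ⟨-, j, hj, hlt⟩ := hmem
      have hjk1 : j = k1 := Fin.ext (by simp [hk1def, hj])
      rw [hjk1] at hlt
      omega
    · rw [if_neg hmem] at h1
      simp only [Finset.card_empty] at h1
      have hnd : ¬ w (psiP w k1) < w (psiP w k) := by
        intro hlt
        apply hmem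
        rw [psiB, Finset.mem_filter]
        exact ⟨Finset.mem_univ _, k1, by simp [hk1def], hlt⟩
      omega

lemma theta_psi (hw : IsURG w) : theta (psiP w) (psiB w) = w := by
  funext i
  rw [theta_eq]
  set m : Fin n := (psiP w).symm i with hm
  have h1 : barCount (psiB w) (m : ℕ) = w (psiP w m) - 1 :=
    barCount_psiB hw (n - 1 - (m : ℕ)) m (by have := m.isLt; omega)
  have h2 : w (psiP w m) = w i := by rw [hm]; simp
  have h3 : 1 ≤ w i := hw.1 _
  omega

end URG

/-- θ is a bijection from barred permutations of [n] onto URGs of length n. -/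
theorem stmt14 (n : ℕ) :
    Set.BijOn (fun x : Equiv.Perm (Fin n) × Finset (Fin n) => theta x.1 x.2)
      {x | IsBarred x.1 x.2} {w : Fin n → ℕ | IsURG w} := by
  refine Set.InvOn.bijOn (f' := fun w : Fin n → ℕ => (psiP w, psiB w)) ⟨?_, ?_⟩ ?_ ?_
  · rintro ⟨p, bars⟩ hb
    simp only [Set.mem_setOf_eq] at hb
    simp only [Prod.mk.injEq]
    exact ⟨psiP_theta hb, psiB_theta hb⟩
  · intro w hw
    exact theta_psi hw
  · intro x hx
    exact theta_isURG hx
  · intro w hw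
    exact psiB_isBarred hw
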